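/- (Proposition 2.1, part on H, for κ ≤ 0) Let κ ≤ 0, let n ≥ 2 be an integer, and let F solve the ODE of the paper with F(0) = 0, F'(0) = 1. Define H(r) := F'(r)² + (n−1) F(r)²/sn_κ(r)². Then H is non-negative and non-increasing on (0,∞). -/

import Mathlib

open Set

/-- The comparison sine function `sn_κ` for `κ ≤ 0`: `sn_0(t) = t` and
`sn_κ(t) = sinh(√(-κ) t)/√(-κ)` for `κ < 0`. -/
noncomputable def snk (κ : ℝ) (t : ℝ) : ℝ :=
  if κ = 0 then t else Real.sinh (Real.sqrt (-κ) * t) / Real.sqrt (-κ)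

lemma snk_hasDerivAt (κ : ℝ) (hκ : κ ≤ 0) (r : ℝ) :
    HasDerivAt (snk κ) (if κ = 0 then 1 else Real.cosh (Real.sqrt (-κ) * r)) r := by
  by_cases h : κ = 0
  · have he : snk κ = fun t => t := funext fun t => if_pos h
    rw [he, if_pos h]
    exact hasDerivAt_id r
  · have hlt : κ < 0 := lt_of_le_of_ne hκ h
    have ha : 0 < Real.sqrt (-κ) := Real.sqrt_pos.2 (by linarith)
    have he : snk κ = fun t => Real.sinh (Real.sqrt (-κ) * t) / Real.sqrt (-κ) :=
      funext fun t => if_neg h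
    rw [he, if_neg h]
    have h1 : HasDerivAt (fun t : ℝ => Real.sqrt (-κ) * t) (Real.sqrt (-κ)) r := by
      simpa using (hasDerivAt_id r).const_mul (Real.sqrt (-κ))
    have h2 : HasDerivAt (fun t : ℝ => Real.sinh (Real.sqrt (-κ) * t))
        (Real.cosh (Real.sqrt (-κ) * r) * Real.sqrt (-κ)) r :=
      (Real.hasDerivAt_sinh _).comp r h1
    have h3 := h2.div_const (Real.sqrt (-κ))
    simpa [mul_div_assoc, div_self ha.ne'] using h3

lemma snk_pos (κ : ℝ) (hκ : κ ≤ 0) {r : ℝ} (hr : 0 < r) : 0 < snk κ r := by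
  by_cases h : κ = 0
  · simpa [snk, h] using hr
  · have hlt : κ < 0 := lt_of_le_of_ne hκ h
    have ha : 0 < Real.sqrt (-κ) := Real.sqrt_pos.2 (by linarith)
    have : 0 < Real.sinh (Real.sqrt (-κ) * r) := Real.sinh_pos_iff.2 (by positivity)
    simp only [snk, if_neg h]
    positivity

lemma snk_deriv_ge_one (κ : ℝ) (hκ : κ ≤ 0) (r : ℝ) : 1 ≤ deriv (snk κ) r := by
  rw [(snk_hasDerivAt κ hκ r).deriv]
  by_cases h : κ = 0
  · simp [h]
  · simpa [h] using Real.one_le_cosh (Real.sqrt (-κ) * r)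

/-- Proposition 2.1 (part on `H`), for `κ ≤ 0`: the function
`H(r) = F'(r)² + (n-1) F(r)²/sn_κ(r)²` is non-negative and non-increasing on `(0,∞)`. -/
theorem H_nonneg_antitone
    (κ : ℝ) (hκ : κ ≤ 0) (n : ℕ) (hn : 2 ≤ n) (F : ℝ → ℝ)
    (hFc : ContinuousOn F (Ici 0))
    (hF2 : ContDiffOn ℝ 2 F (Ioi 0))
    (hF0 : F 0 = 0)
    (hF'0 : HasDerivWithinAt F 1 (Ici 0) 0)
    (hODE : ∀ r > 0, deriv (deriv F) r
      + ((n : ℝ) - 1) * (deriv (snk κ) r / snk κ r) * deriv F r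
      - (((n : ℝ) - 1) / (snk κ r) ^ 2) * F r = 0)
    (hFpos : ∀ r > 0, 0 < F r) (hF'pos : ∀ r > 0, 0 < deriv F r)
    (H : ℝ → ℝ)
    (hH : ∀ r, H r = (deriv F r) ^ 2 + ((n : ℝ) - 1) * (F r) ^ 2 / (snk κ r) ^ 2) :
    (∀ r > 0, 0 ≤ H r) ∧ AntitoneOn H (Ioi 0) := by
  set c : ℝ := (n : ℝ) - 1 with hc
  have hc1 : (1 : ℝ) ≤ c := by
    have : (2 : ℝ) ≤ (n : ℝ) := by exact_mod_cast hn
    simp [hc]; linarith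
  have hcpos : 0 < c := lt_of_lt_of_le one_pos hc1
  -- nonnegativity
  have hnonneg : ∀ r > 0, 0 ≤ H r := by
    intro r hr
    rw [hH r]
    have hs := snk_pos κ hκ hr
    positivity
  refine ⟨hnonneg, ?_⟩
  -- differentiability facts
  have hopen : IsOpen (Ioi (0:ℝ)) := isOpen_Ioi
  have hF1 : ContDiffOn ℝ 1 (deriv F) (Ioi 0) :=
    hF2.deriv_of_isOpen hopen (by norm_num)
  have hGdiff : DifferentiableOn ℝ (deriv F) (Ioi 0) :=
    hF1.differentiableOn one_ne_zero
  have hFdiff : DifferentiableOn ℝ F (Ioi 0) :=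
    hF2.differentiableOn (by norm_num)
  -- derivative of H at each point of (0,∞)
  have hasH : ∀ r ∈ Ioi (0:ℝ), HasDerivAt H
      (2 * deriv F r * deriv (deriv F) r
        + c * ((2 * F r * deriv F r * (snk κ r) ^ 2
            - (F r) ^ 2 * (2 * snk κ r * deriv (snk κ) r)) / ((snk κ r) ^ 2) ^ 2)) r := by
    intro r hr
    have hrmem : Ioi (0:ℝ) ∈ nhds r := hopen.mem_nhds hr
    have hs := snk_pos κ hκ hr
    have hHeq : H = fun x => (deriv F x) ^ 2 + c * (F x) ^ 2 / (snk κ x) ^ 2 :=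
      funext fun x => hH x
    have hGat : HasDerivAt (deriv F) (deriv (deriv F) r) r :=
      ((hGdiff.differentiableAt hrmem).hasDerivAt)
    have hFat : HasDerivAt F (deriv F r) r :=
      ((hFdiff.differentiableAt hrmem).hasDerivAt)
    have hsnat : HasDerivAt (snk κ) (deriv (snk κ) r) r :=
      (snk_hasDerivAt κ hκ r).deriv ▸ snk_hasDerivAt κ hκ r
    have h1 : HasDerivAt (fun x => (deriv F x) ^ 2)
        (2 * deriv F r * deriv (deriv F) r) r := by
      have : HasDerivAt (fun x => (deriv F x) ^ 2) _ r := hGat.pow 2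
      simpa [mul_comm, mul_assoc] using this
    have hF2at : HasDerivAt (fun x => (F x) ^ 2) (2 * F r * deriv F r) r := by
      have : HasDerivAt (fun x => (F x) ^ 2) _ r := hFat.pow 2
      simpa [mul_comm, mul_assoc] using this
    have hs2at : HasDerivAt (fun x => (snk κ x) ^ 2)
        (2 * snk κ r * deriv (snk κ) r) r := by
      have : HasDerivAt (fun x => (snk κ x) ^ 2) _ r := hsnat.pow 2
      simpa [mul_comm, mul_assoc] using this
    have hdiv : HasDerivAt (fun x => (F x) ^ 2 / (snk κ x) ^ 2)
        ((2 * F r * deriv F r * (snk κ r) ^ 2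
          - (F r) ^ 2 * (2 * snk κ r * deriv (snk κ) r)) / ((snk κ r) ^ 2) ^ 2) r :=
      hF2at.div hs2at (by positivity)
    have : HasDerivAt (fun x => (deriv F x) ^ 2 + c * ((F x) ^ 2 / (snk κ x) ^ 2)) _ r :=
      h1.add (hdiv.const_mul c)
    rw [hHeq]
    simpa [mul_div_assoc] using this
  -- the derivative is nonpositive
  have hderiv_nonpos : ∀ r ∈ Ioi (0:ℝ), deriv H r ≤ 0 := by
    intro r hr
    rw [(hasH r hr).deriv]
    set s := snk κ r with hsdef
    set d := deriv (snk κ) r with hddef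
    set f := F r with hfdef
    set f' := deriv F r with hf'def
    set f'' := deriv (deriv F) r with hf''def
    have hs : 0 < s := snk_pos κ hκ hr
    have hd : 1 ≤ d := snk_deriv_ge_one κ hκ r
    have hf : 0 < f := hFpos r hr
    have hf' : 0 < f' := hF'pos r hr
    have hode := hODE r hr
    have hode2 : f'' * s ^ 2 + c * d * s * f' - c * f = 0 := by
      have h1 : f'' + c * (d / s) * f' - (c / s ^ 2) * f = 0 := hode
      field_simp at h1
      have h1' : (f'' * s ^ 2 + c * d * s * f' - c * f) * s = 0 := by linear_combination s * h1
      exact (mul_eq_zero.mp h1').resolve_right hs.ne'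
    have h3 : f'' * s ^ 2 = c * f - c * d * s * f' := by linarith
    have key : 0 ≤ d * s ^ 2 * f' ^ 2 - 2 * s * f * f' + d * f ^ 2 := by
      nlinarith [sq_nonneg (s * f' - f), mul_nonneg (sub_nonneg.2 hd)
        (add_nonneg (sq_nonneg (s * f')) (sq_nonneg f))]
    have hnum : 2 * f' * f'' * s ^ 4 + c * (2 * f * f' * s ^ 2 - f ^ 2 * (2 * s * d)) ≤ 0 := by
      have goalEq : 2 * f' * f'' * s ^ 4 + c * (2 * f * f' * s ^ 2 - f ^ 2 * (2 * s * d))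
          = 2 * f' * s ^ 2 * (c * f - c * d * s * f')
            + c * (2 * f * f' * s ^ 2 - f ^ 2 * (2 * s * d)) := by
        rw [← h3]; ring
      rw [goalEq]
      nlinarith [mul_nonneg (show (0:ℝ) ≤ 2 * c * s by positivity) key]
    have hrw : 2 * f' * f'' + c * ((2 * f * f' * s ^ 2 - f ^ 2 * (2 * s * d)) / (s ^ 2) ^ 2)
        = (2 * f' * f'' * s ^ 4 + c * (2 * f * f' * s ^ 2 - f ^ 2 * (2 * s * d))) / s ^ 4 := by
      field_simp
    rw [hrw]
    exact div_nonpos_of_nonpos_of_nonneg hnum (by positivity)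
  -- conclude antitone
  have hHdiff : DifferentiableOn ℝ H (Ioi 0) :=
    fun r hr => ((hasH r hr).differentiableAt).differentiableWithinAt
  have := antitoneOn_of_deriv_nonpos (convex_Ioi (0:ℝ)) hHdiff.continuousOn
    (by rw [interior_Ioi]; exact hHdiff) (by rw [interior_Ioi]; exact hderiv_nonpos)
  exact this
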